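/- arXiv:2310.02142 — 2 statements merged into one kernel-verified Lean document; each statement's English description precedes it below -/
import Mathlib

section
/- Let G be an n-player reachability game on a possibly infinite arena, where player i's objective is Reach(T_i) for a target set T_i ⊆ V, and let σ' be a Nash equilibrium from a vertex v_0. Then there exists a Nash equilibrium σ from v_0 in which every strategy is finite-memory with memory size at most max{1, n − |Sat(out(σ', v_0))|} · max{1, |Visit(out(σ', v_0)) ∖ {0}|} (in particular at most n²), and such that Sat(out(σ, v_0)) = Sat(out(σ', v_0)). -/
open scoped ENNReal Classical

/-- An `n`-player arena on a (possibly infinite) directed graph: an edge relation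
with no deadlocks, together with an assignment of each vertex to its owner. -/
structure Arena (V : Type) (n : ℕ) where
  E : V → V → Prop
  owner : V → Fin n
  no_deadlock : ∀ v, ∃ v', E v v'

namespace Arena

variable {V : Type} {n : ℕ}

/-- A play: an infinite sequence of vertices following edges. -/
def IsPlay (A : Arena V n) (π : ℕ → V) : Prop := ∀ j, A.E (π j) (π (j + 1))

/-- A strategy: given the past history (the earlier vertices, oldest first) and the
current vertex, pick an `E`-successor of the current vertex. -/
structure Strategy (A : Arena V n) where
  next : List V → V → V
  valid : ∀ h v, A.E v (next h v)

/-- The list of the first `j` vertices of a play. -/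
def pref (π : ℕ → V) (j : ℕ) : List V := (List.range j).map π

/-- A play is consistent with the strategy `σ` used by player `i`. -/
def Consistent (A : Arena V n) (i : Fin n) (σ : A.Strategy) (π : ℕ → V) : Prop :=
  ∀ j, A.owner (π j) = i → π (j + 1) = σ.next (pref π j) (π j)

/-- A memoryless strategy only depends on the current vertex. -/
def Memoryless {A : Arena V n} (σ : A.Strategy) : Prop :=
  ∀ h h' v, σ.next h v = σ.next h' v

def outcomeAux (A : Arena V n) (σ : Fin n → A.Strategy) (v0 : V) : ℕ → List V × V
  | 0 => ([], v0)
  | j + 1 =>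
      let p := outcomeAux A σ v0 j
      (p.1 ++ [p.2], (σ (A.owner p.2)).next p.1 p.2)

/-- The outcome of the strategy profile `σ` from `v0`: the unique play from `v0`
consistent with every strategy of the profile. -/
def outcome (A : Arena V n) (σ : Fin n → A.Strategy) (v0 : V) (j : ℕ) : V :=
  (outcomeAux A σ v0 j).2

/-- Reachability objective: visit `T`. -/
def ReachObj (T : Set V) : Set (ℕ → V) := {π | ∃ j, π j ∈ T}

/-- Safety objective: never visit `T`. -/
def SafeObj (T : Set V) : Set (ℕ → V) := {π | ∀ j, π j ∉ T}

/-- Büchi objective: visit `T` infinitely often. -/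
def BuchiObj (T : Set V) : Set (ℕ → V) := {π | ∀ j, ∃ k, j ≤ k ∧ π k ∈ T}

/-- co-Büchi objective: visit `T` only finitely often. -/
def CoBuchiObj (T : Set V) : Set (ℕ → V) := {π | ∃ j, ∀ k, j ≤ k → π k ∉ T}

/-- Shortest-path cost of a play: the total weight up to the first visit of `T`,
and `⊤` if `T` is never visited. -/
noncomputable def spCost (w : V → V → ℕ) (T : Set V) (π : ℕ → V) : ℝ≥0∞ :=
  if ∃ k, π k ∈ T then
    (Finset.range (sInf {k | π k ∈ T})).sum fun j => (w (π j) (π (j + 1)) : ℝ≥0∞)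
  else ⊤

/-- Winning region of player `p` (whose objective is `Ω`) in a two-player game:
vertices from which `p` has a strategy all of whose consistent plays lie in `Ω`. -/
def WinRegion (A : Arena V 2) (p : Fin 2) (Ω : Set (ℕ → V)) : Set V :=
  {v | ∃ σ : A.Strategy, ∀ π, A.IsPlay π → π 0 = v → A.Consistent p σ π → π ∈ Ω}

/-- Lower value `inf_{σ₁} sup_{σ₂}` of a two-player zero-sum game with cost `c`
(minimised by player 1, maximised by player 2). -/
noncomputable def valIS (A : Arena V 2) (c : (ℕ → V) → ℝ≥0∞) (v : V) : ℝ≥0∞ :=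
  ⨅ σ1 : A.Strategy, ⨆ σ2 : A.Strategy, c (outcome A ![σ1, σ2] v)

/-- Upper value `sup_{σ₂} inf_{σ₁}`. -/
noncomputable def valSI (A : Arena V 2) (c : (ℕ → V) → ℝ≥0∞) (v : V) : ℝ≥0∞ :=
  ⨆ σ2 : A.Strategy, ⨅ σ1 : A.Strategy, c (outcome A ![σ1, σ2] v)

/-- Nash equilibrium from `v0` for cost functions (each player minimises):
no unilateral deviation decreases the deviator's cost. -/
def IsNECost (A : Arena V n) (cost : Fin n → (ℕ → V) → ℝ≥0∞)
    (σ : Fin n → A.Strategy) (v0 : V) : Prop :=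
  ∀ (i : Fin n) (τ : A.Strategy),
    cost i (outcome A σ v0) ≤ cost i (outcome A (Function.update σ i τ) v0)

/-- Nash equilibrium from `v0` for objectives: if a unilateral deviation of player `i`
satisfies `Ω i`, then so does the equilibrium outcome. -/
def IsNEObj (A : Arena V n) (Ω : Fin n → Set (ℕ → V))
    (σ : Fin n → A.Strategy) (v0 : V) : Prop :=
  ∀ (i : Fin n) (τ : A.Strategy),
    outcome A (Function.update σ i τ) v0 ∈ Ω i → outcome A σ v0 ∈ Ω i

/-- The coalition arena of player `i`: player `i` (as player `0`) against all others. -/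
def coalition (A : Arena V n) (i : Fin n) : Arena V 2 where
  E := A.E
  owner := fun v => if A.owner v = i then 0 else 1
  no_deadlock := A.no_deadlock

/-- Winning region of player `i` in their coalition game for objective `Ω`. -/
def coalWin (A : Arena V n) (i : Fin n) (Ω : Set (ℕ → V)) : Set V :=
  WinRegion (coalition A i) 0 Ω

/-- Value of a vertex in player `i`'s coalition game with cost `c`. -/
noncomputable def coalVal (A : Arena V n) (i : Fin n) (c : (ℕ → V) → ℝ≥0∞) (v : V) :
    ℝ≥0∞ :=
  valIS (coalition A i) c v

/-- Players whose reachability objective is satisfied by `π`. -/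
def satReach (T : Fin n → Set V) (π : ℕ → V) : Set (Fin n) := {i | ∃ j, π j ∈ T i}

/-- Players whose safety objective is satisfied by `π`. -/
def satSafe (T : Fin n → Set V) (π : ℕ → V) : Set (Fin n) := {i | ∀ j, π j ∉ T i}

/-- Players whose Büchi objective is satisfied by `π`. -/
def satBuchi (T : Fin n → Set V) (π : ℕ → V) : Set (Fin n) :=
  {i | ∀ j, ∃ k, j ≤ k ∧ π k ∈ T i}

/-- Players whose co-Büchi objective is satisfied by `π`. -/
def satCoBuchi (T : Fin n → Set V) (π : ℕ → V) : Set (Fin n) :=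
  {i | ∃ j, ∀ k, j ≤ k → π k ∉ T i}

/-- Earliest positions at which the targets visited by `π` are first visited. -/
def visitSet (T : Fin n → Set V) (π : ℕ → V) : Set ℕ :=
  {m | ∃ i, (∃ j, π j ∈ T i) ∧ m = sInf {j | π j ∈ T i}}

/-- A Mealy machine with memory states `M`. -/
structure Mealy (A : Arena V n) (M : Type) where
  init : M
  up : M → V → M
  nxt : M → V → V
  valid : ∀ m v, A.E v (nxt m v)

/-- The strategy `σ` is induced by the Mealy machine `mm`. -/
def InducedBy {A : Arena V n} {M : Type} (σ : A.Strategy) (mm : Mealy A M) : Prop :=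
  ∀ h v, σ.next h v = mm.nxt (h.foldl mm.up mm.init) v

/-- `σ` has memory size at most `b`. -/
def HasMemorySize {A : Arena V n} (σ : A.Strategy) (b : ℕ) : Prop :=
  ∃ (M : Type) (mm : Mealy A M), Finite M ∧ Nat.card M ≤ b ∧ InducedBy σ mm

/-- `σ` is a finite-memory strategy. -/
def FiniteMemory {A : Arena V n} (σ : A.Strategy) : Prop :=
  ∃ (M : Type) (mm : Mealy A M), Finite M ∧ InducedBy σ mm

/-- The (finite) segment of `π` between positions `a` and `b` is a simple history. -/
def SimpleSeg (π : ℕ → V) (a b : ℕ) : Prop :=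
  ∀ m m', a ≤ m → m ≤ b → a ≤ m' → m' ≤ b → π m = π m' → m = m'

/-- The suffix of `π` from position `a` is a simple play. -/
def SimplePlaySeg (π : ℕ → V) (a : ℕ) : Prop :=
  ∀ m m', a ≤ m → a ≤ m' → π m = π m' → m = m'

/-- The suffix of `π` from position `a` is a simple lasso `p c^ω` with `p c`
a simple history. -/
def SimpleLassoSeg (π : ℕ → V) (a : ℕ) : Prop :=
  ∃ k ℓ, 0 < ℓ ∧ (∀ m, a + k ≤ m → π (m + ℓ) = π m) ∧
    ∀ m m', a ≤ m → m < a + k + ℓ → a ≤ m' → m' < a + k + ℓ → π m = π m' → m = m'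

/-- The segment of `π` between positions `a` and `b` is a simple cycle. -/
def SimpleCycleSeg (π : ℕ → V) (a b : ℕ) : Prop :=
  a < b ∧ π b = π a ∧
    ∀ m m', a ≤ m → m < b → a ≤ m' → m' < b → π m = π m' → m = m'

/-- Total weight of a history (a list of vertices). -/
def histWeight (w : V → V → ℕ) : List V → ℕ
  | [] => 0
  | [_] => 0
  | a :: b :: t => w a b + histWeight w (b :: t)

/-- The list of vertices along positions `a..b` (inclusive) of a play. -/
def segList (π : ℕ → V) (a b : ℕ) : List V :=
  (List.range (b - a + 1)).map fun m => π (a + m)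

/-- The segment of `π` between positions `a` and `b` has minimal weight among all
histories that share its first and last vertex and traverse only its vertices. -/
def MinWeightSeg (A : Arena V n) (w : V → V → ℕ) (π : ℕ → V) (a b : ℕ) : Prop :=
  ∀ h : List V, h ≠ [] → List.Chain' A.E h →
    h.head? = some (π a) → h.getLast? = some (π b) →
    (∀ x ∈ h, ∃ m, a ≤ m ∧ m ≤ b ∧ π m = x) →
    histWeight w (segList π a b) ≤ histWeight w h

/-- Given cut positions `p`, segments number `l` and `l'` of `π` carry the same
vertex sequence. -/
def SegEq (π : ℕ → V) (p : ℕ → ℕ) (l l' : ℕ) : Prop :=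
  p (l' + 1) - p l' = p (l + 1) - p l ∧
    ∀ m, m ≤ p (l + 1) - p l → π (p l' + m) = π (p l + m)

/-- There is no cycle of the arena using only vertices of `S` and avoiding `avoid`. -/
def NoCycleAvoid (A : Arena V n) (S : Set V) (avoid : V) : Prop :=
  ¬ ∃ (m : ℕ) (c : ℕ → V), 0 < m ∧ (∀ j, j < m → A.E (c j) (c (j + 1))) ∧
      c m = c 0 ∧ ∀ j, j ≤ m → c j ∈ S ∧ c j ≠ avoid

set_option linter.dupNamespace false

lemma pref_succ (π : ℕ → V) (j : ℕ) : pref π (j + 1) = pref π j ++ [π j] := by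
  simp [pref, List.range_succ]

lemma pref_length (π : ℕ → V) (j : ℕ) : (pref π j).length = j := by simp [pref]

lemma pref_tail (π : ℕ → V) (j : ℕ) :
    (pref π (j + 1)).tail = pref (fun k => π (k + 1)) j := by
  simp [pref, List.range_succ_eq_map, List.map_map]; try rfl

lemma pref_drop (π : ℕ → V) (J j : ℕ) :
    (pref π (J + j)).drop J = pref (fun k => π (J + k)) j := by
  rw [pref, List.range_add, List.map_append]
  rw [List.drop_left' (by simp), pref, List.map_map]
  rfl

lemma foldl_pref_succ {M : Type} (up : M → V → M) (init : M) (μ : ℕ → V) (k : ℕ) :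
    (pref μ (k + 1)).foldl up init = up ((pref μ k).foldl up init) (μ k) := by
  rw [pref_succ, List.foldl_append]
  rfl

variable {A : Arena V n}

lemma outcomeAux_fst (σ : Fin n → A.Strategy) (v0 : V) (j : ℕ) :
    (outcomeAux A σ v0 j).1 = pref (outcome A σ v0) j := by
  induction j with
  | zero => rfl
  | succ j ih =>
      show (outcomeAux A σ v0 j).1 ++ [(outcomeAux A σ v0 j).2] = _
      rw [ih, pref_succ]
      rfl

lemma outcome_zero (σ : Fin n → A.Strategy) (v0 : V) : outcome A σ v0 0 = v0 := rfl

lemma outcome_succ (σ : Fin n → A.Strategy) (v0 : V) (j : ℕ) :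
    outcome A σ v0 (j + 1) =
      (σ (A.owner (outcome A σ v0 j))).next (pref (outcome A σ v0) j)
        (outcome A σ v0 j) := by
  show (outcomeAux A σ v0 (j + 1)).2 = _
  rw [outcomeAux, ← outcomeAux_fst]
  rfl

lemma outcome_isPlay (σ : Fin n → A.Strategy) (v0 : V) : A.IsPlay (outcome A σ v0) := by
  intro j
  rw [outcome_succ]
  exact (σ _).valid _ _

/-- Default strategy (arbitrary valid moves). -/
noncomputable def dfltS (A : Arena V n) : A.Strategy :=
  ⟨fun _ v => (A.no_deadlock v).choose, fun _ v => (A.no_deadlock v).choose_spec⟩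

/-- The winning region of player `i` for reaching `T i` against all others. -/
def Wset (A : Arena V n) (T : Fin n → Set V) (i : Fin n) : Set V :=
  {v | ∃ τ : A.Strategy, ∀ π, A.IsPlay π → π 0 = v → A.Consistent i τ π →
      ∃ k, π k ∈ T i}

lemma subset_Wset (T : Fin n → Set V) (i : Fin n) : T i ⊆ Wset A T i :=
  fun _ hv => ⟨dfltS A, fun _ _ h0 _ => ⟨0, h0 ▸ hv⟩⟩

noncomputable def winStrat (A : Arena V n) (T : Fin n → Set V) (i : Fin n) (w : V) :
    A.Strategy :=
  if h : w ∈ Wset A T i then h.choose else dfltS A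

lemma winStrat_spec {T : Fin n → Set V} {i : Fin n} {w : V} (hw : w ∈ Wset A T i) :
    ∀ π, A.IsPlay π → π 0 = w → A.Consistent i (winStrat A T i w) π →
      ∃ k, π k ∈ T i := by
  rw [winStrat, dif_pos hw]
  exact hw.choose_spec

lemma mem_Wset_of_succ {T : Fin n → Set V} {i : Fin n} {v w : V}
    (ho : A.owner v = i) (hw : A.E v w) (hwW : w ∈ Wset A T i) : v ∈ Wset A T i := by
  obtain ⟨τw, hτw⟩ := hwW
  refine ⟨⟨fun h u => if h = [] then (if hE : A.E u w then w else (dfltS A).next h u)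
      else τw.next h.tail u, ?_⟩, ?_⟩
  · intro h u
    by_cases hh : h = [] <;> simp only [hh, if_true, if_false, reduceIte]
    · split
      · assumption
      · exact (dfltS A).valid _ _
    · exact τw.valid _ _
  · intro π hπ h0 hcons
    have h1 : π 1 = w := by
      have := hcons 0 (h0 ▸ ho)
      simp only [pref, List.range_zero, List.map_nil, if_true, reduceIte] at this
      rw [this, h0, dif_pos hw]
    have hshift := hτw (fun k => π (k + 1)) (fun j => hπ (j + 1)) h1 ?_
    · obtain ⟨k, hk⟩ := hshift
      exact ⟨k + 1, hk⟩
    · intro j hj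
      have := hcons (j + 1) hj
      show π (j + 1 + 1) = _
      rw [this]
      have hne : pref π (j + 1) ≠ [] := by
        intro hcon
        have := pref_length π (j + 1)
        rw [hcon] at this
        simp at this
      simp only [if_neg hne, pref_tail]

lemma mem_Wset_of_forall_succ {T : Fin n → Set V} {i : Fin n} {v : V}
    (ho : A.owner v ≠ i) (hall : ∀ w, A.E v w → w ∈ Wset A T i) : v ∈ Wset A T i := by
  refine ⟨⟨fun h u => if h = [] then (dfltS A).next h u
      else (winStrat A T i (h.tail.headD u)).next h.tail u, ?_⟩, ?_⟩
  · intro h u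
    by_cases hh : h = [] <;> simp only [hh, if_true, if_false, reduceIte]
    · exact (dfltS A).valid _ _
    · exact (winStrat A T i _).valid _ _
  · intro π hπ h0 hcons
    have hw : π 1 ∈ Wset A T i := hall (π 1) (h0 ▸ hπ 0)
    have hshift := winStrat_spec hw (fun k => π (k + 1)) (fun j => hπ (j + 1)) rfl ?_
    · obtain ⟨k, hk⟩ := hshift
      exact ⟨k + 1, hk⟩
    · intro j hj
      have hcons' := hcons (j + 1) hj
      show π (j + 1 + 1) = _
      rw [hcons']
      have hne : pref π (j + 1) ≠ [] := by
        intro hcon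
        have := pref_length π (j + 1)
        rw [hcon] at this
        simp at this
      simp only [if_neg hne, pref_tail]
      have hX : (pref (fun k => π (k + 1)) j).headD (π (j + 1)) = π 1 := by
        cases j with
        | zero => simp [pref]
        | succ j => simp [pref, List.range_succ_eq_map]
      rw [hX]

lemma notin_Wset_succ {T : Fin n → Set V} {i : Fin n} {v w : V}
    (hv : v ∉ Wset A T i) (ho : A.owner v = i) (hw : A.E v w) : w ∉ Wset A T i :=
  fun hwW => hv (mem_Wset_of_succ ho hw hwW)

lemma notin_Wset_exists_succ {T : Fin n → Set V} {i : Fin n} {v : V}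
    (hv : v ∉ Wset A T i) (ho : A.owner v ≠ i) : ∃ w, A.E v w ∧ w ∉ Wset A T i := by
  by_contra hcon
  push_neg at hcon
  exact hv (mem_Wset_of_forall_succ ho hcon)

/-- Punishment: a memoryless choice staying outside the deviator's winning region. -/
noncomputable def punish (A : Arena V n) (T : Fin n → Set V) (i : Fin n) (v : V) : V :=
  if h : ∃ w, A.E v w ∧ w ∉ Wset A T i then h.choose else (A.no_deadlock v).choose

lemma punish_valid (T : Fin n → Set V) (i : Fin n) (v : V) : A.E v (punish A T i v) := by
  rw [punish]
  split
  · next h => exact h.choose_spec.1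
  · exact (A.no_deadlock v).choose_spec

lemma punish_avoid {T : Fin n → Set V} {i : Fin n} {v : V} (hv : v ∉ Wset A T i) :
    punish A T i v ∉ Wset A T i := by
  have hex : ∃ w, A.E v w ∧ w ∉ Wset A T i := by
    by_cases ho : A.owner v = i
    · obtain ⟨w, hw⟩ := A.no_deadlock v
      exact ⟨w, hw, notin_Wset_succ hv ho hw⟩
    · exact notin_Wset_exists_succ hv ho
  rw [punish, dif_pos hex]
  exact hex.choose_spec.2

/-- Along the NE outcome, no unsatisfied player ever passes through their winning region. -/
lemma outcome_notin_Wset {T : Fin n → Set V} {σ' : Fin n → A.Strategy} {v0 : V}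
    (hNE : A.IsNEObj (fun i => ReachObj (T i)) σ' v0) {i : Fin n}
    (hi : i ∉ satReach T (outcome A σ' v0)) (J : ℕ) :
    outcome A σ' v0 J ∉ Wset A T i := by
  intro hW
  obtain ⟨τ0, hτ0⟩ := hW
  set π := outcome A σ' v0 with hπdef
  -- deviation strategy
  set τ : A.Strategy := ⟨fun h u => if h.length < J then (σ' i).next h u
      else τ0.next (h.drop J) u, by
    intro h u
    split
    · exact (σ' i).valid _ _
    · exact τ0.valid _ _⟩ with hτdef
  set μ := outcome A (Function.update σ' i τ) v0 with hμdef
  have agree : ∀ j, j ≤ J →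
      outcomeAux A (Function.update σ' i τ) v0 j = outcomeAux A σ' v0 j := by
    intro j
    induction j with
    | zero => intro _; rfl
    | succ j ih =>
        intro hj
        have hj' : j < J := hj
        show (_, _) = (_, _)
        rw [ih (le_of_lt hj')]
        congr 1
        by_cases how : A.owner ((outcomeAux A σ' v0 j).2) = i
        · rw [how, Function.update_self]
          show (if ((outcomeAux A σ' v0 j).1).length < J then _ else _) = _
          rw [outcomeAux_fst, pref_length, if_pos hj']
        · rw [Function.update_of_ne how]
  have hμJ : μ J = π J := by
    show (outcomeAux A (Function.update σ' i τ) v0 J).2 = (outcomeAux A σ' v0 J).2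
    rw [agree J le_rfl]
  have hshift := hτ0 (fun k => μ (J + k)) (fun j => by
      have := outcome_isPlay (Function.update σ' i τ) v0 (J + j)
      show A.E (μ (J + j)) (μ (J + (j + 1)))
      rw [show J + (j + 1) = (J + j) + 1 by ring]
      exact this)
    (by simpa using hμJ) ?_
  · obtain ⟨k, hk⟩ := hshift
    have hreach : μ ∈ ReachObj (T i) := ⟨J + k, hk⟩
    have := hNE i τ hreach
    exact hi this
  · intro j hj
    have hcons := outcome_succ (Function.update σ' i τ) v0 (J + j)
    rw [← hμdef] at hcons
    show μ (J + (j + 1)) = _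
    rw [show J + (j + 1) = (J + j) + 1 by ring, hcons]
    have how : A.owner (μ (J + j)) = i := hj
    rw [how, Function.update_self, hτdef]
    show (if (pref μ (J + j)).length < J then _ else _) = _
    rw [pref_length, if_neg (by omega), pref_drop]

section Construction

variable (A : Arena V n) (T : Fin n → Set V) (π : ℕ → V)

lemma visD_finite : ((visitSet T π) \ {0}).Finite := by
  apply Set.Finite.subset (Set.finite_range fun i : Fin n => sInf {j | π j ∈ T i})
  rintro m ⟨⟨i, _, hm⟩, -⟩
  exact ⟨i, hm.symm⟩

noncomputable def DF : Finset ℕ := (visD_finite T π).toFinset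

noncomputable def Lnum : ℕ := (DF T π).card

noncomputable def Lb : ℕ := max 1 (Lnum T π)

noncomputable def tcut (l : ℕ) : ℕ :=
  if l = 0 then 0 else ((DF T π).sort (· ≤ ·)).getD (l - 1) 0

lemma tcut_zero : tcut T π 0 = 0 := rfl

lemma tcut_mem {m : ℕ} (h1 : 1 ≤ m) (h2 : m ≤ Lnum T π) :
    tcut T π m ∈ visitSet T π \ {0} := by
  have hlen : ((DF T π).sort (· ≤ ·)).length = Lnum T π := Finset.length_sort _
  have hm : m - 1 < ((DF T π).sort (· ≤ ·)).length := by omega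
  have : tcut T π m = ((DF T π).sort (· ≤ ·))[m-1] := by
    rw [tcut, if_neg (by omega), List.getD_eq_getElem _ _ hm]
  rw [this]
  have := List.getElem_mem hm
  rw [Finset.mem_sort] at this
  unfold DF at this
  rwa [Set.Finite.mem_toFinset] at this

lemma tcut_lt {m : ℕ} (h : m + 1 ≤ Lnum T π) : tcut T π m < tcut T π (m + 1) := by
  cases m with
  | zero =>
      have := tcut_mem T π (le_refl 1) h
      have hne : tcut T π 1 ≠ 0 := by
        intro hc
        rw [hc] at this
        exact this.2 rfl
      rw [show (0:ℕ) + 1 = 1 from rfl, tcut_zero]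
      omega
  | succ k =>
      have hlen : ((DF T π).sort (· ≤ ·)).length = Lnum T π := Finset.length_sort _
      have h1 : k < ((DF T π).sort (· ≤ ·)).length := by omega
      have h2 : k + 1 < ((DF T π).sort (· ≤ ·)).length := by omega
      have hs := (Finset.sortedLT_sort (DF T π)).pairwise
      have := List.pairwise_iff_getElem.1 hs k (k+1) h1 h2 (by omega)
      rw [tcut, if_neg (by omega), tcut, if_neg (by omega)]
      show ((DF T π).sort (· ≤ ·)).getD (k + 1 - 1) 0 < ((DF T π).sort (· ≤ ·)).getD (k + 1 + 1 - 1) 0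
      rw [show k + 1 - 1 = k from rfl, show k + 1 + 1 - 1 = k + 1 from rfl,
        List.getD_eq_getElem _ _ h1, List.getD_eq_getElem _ _ h2]
      exact this

lemma tcut_le {m : ℕ} (h : m + 1 ≤ Lnum T π) : tcut T π m ≤ tcut T π (m + 1) :=
  le_of_lt (tcut_lt T π h)

lemma tcut_surj {d : ℕ} (hd : d ∈ visitSet T π \ {0}) :
    ∃ m, 1 ≤ m ∧ m ≤ Lnum T π ∧ tcut T π m = d := by
  have : d ∈ (DF T π).sort (· ≤ ·) := by
    rw [Finset.mem_sort]
    unfold DF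
    rw [Set.Finite.mem_toFinset]
    exact hd
  obtain ⟨idx, hidx, heq⟩ := List.mem_iff_getElem.1 this
  have hlen : ((DF T π).sort (· ≤ ·)).length = Lnum T π := Finset.length_sort _
  refine ⟨idx + 1, by omega, by omega, ?_⟩
  rw [tcut, if_neg (by omega)]
  have : d ∈ DF T π → True := fun _ => trivial
  rw [show idx + 1 - 1 = idx from rfl, List.getD_eq_getElem _ _ hidx]
  exact heq

/-- The window of positions of `π` in phase `l` at which `v` occurs. -/
def win1 (l : ℕ) (v : V) : Set ℕ :=
  {j | π j = v ∧ tcut T π l ≤ j ∧ j ≤ tcut T π (l + 1)}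

/-- `v` is an on-path vertex for phase `l`. -/
def OnP (l : ℕ) (v : V) : Prop :=
  ∃ j, π j = v ∧ tcut T π l ≤ j ∧ (l + 1 < Lb T π → j ≤ tcut T π (l + 1))

noncomputable def jsel (l : ℕ) (v : V) : ℕ :=
  if (win1 T π l v).Nonempty then sSup (win1 T π l v)
  else sInf {j | π j = v ∧ tcut T π l ≤ j}

lemma win1_bdd (l : ℕ) (v : V) : BddAbove (win1 T π l v) :=
  ⟨tcut T π (l + 1), fun _ hx => hx.2.2⟩

lemma jsel_spec {l : ℕ} {v : V} (h : OnP T π l v) :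
    π (jsel T π l v) = v ∧ tcut T π l ≤ jsel T π l v ∧
      (l + 1 < Lb T π → jsel T π l v ≤ tcut T π (l + 1)) := by
  by_cases hne : (win1 T π l v).Nonempty
  · rw [jsel, if_pos hne]
    have hmem := Nat.sSup_mem hne (win1_bdd T π l v)
    exact ⟨hmem.1, hmem.2.1, fun _ => hmem.2.2⟩
  · rw [jsel, if_neg hne]
    obtain ⟨j, hj1, hj2, hj3⟩ := h
    have hne2 : ({j | π j = v ∧ tcut T π l ≤ j} : Set ℕ).Nonempty := ⟨j, hj1, hj2⟩
    have hmem := Nat.sInf_mem hne2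
    refine ⟨hmem.1, hmem.2, fun hlt => ?_⟩
    exact absurd ⟨j, hj1, hj2, hj3 hlt⟩ hne

lemma jsel_eq_sSup {l : ℕ} {v : V} (hne : (win1 T π l v).Nonempty) :
    jsel T π l v = sSup (win1 T π l v) := by rw [jsel, if_pos hne]

lemma lt_Lb_lt_Lnum {l : ℕ} (h : l + 1 < Lb T π) : l + 1 < Lnum T π := by
  rw [Lb] at h
  omega

lemma onp_step {l : ℕ} {v : V} (h : OnP T π l v) :
    OnP T π (if l + 1 < Lb T π ∧ v = π (tcut T π (l + 1)) then l + 1 else l)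
      (π (jsel T π l v + 1)) := by
  by_cases hc : l + 1 < Lb T π ∧ v = π (tcut T π (l + 1))
  · rw [if_pos hc]
    obtain ⟨hlt, hv⟩ := hc
    have hL : l + 1 < Lnum T π := lt_Lb_lt_Lnum T π hlt
    have hmem : tcut T π (l + 1) ∈ win1 T π l v :=
      ⟨hv.symm, tcut_le T π (by omega), le_refl _⟩
    have hne : (win1 T π l v).Nonempty := ⟨_, hmem⟩
    have hsup : jsel T π l v = tcut T π (l + 1) := by
      rw [jsel_eq_sSup T π hne]
      exact le_antisymm (csSup_le hne fun x hx => hx.2.2) (le_csSup (win1_bdd T π l v) hmem)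
    rw [hsup]
    exact ⟨tcut T π (l + 1) + 1, rfl, by omega, fun h2 => by
      have := tcut_lt T π (m := l + 1) (le_of_lt (lt_Lb_lt_Lnum T π h2))
      omega⟩
  · rw [if_neg hc]
    obtain ⟨h1, h2, h3⟩ := jsel_spec T π h
    refine ⟨jsel T π l v + 1, rfl, by omega, fun hlt => ?_⟩
    have hb := h3 hlt
    have : jsel T π l v ≠ tcut T π (l + 1) := by
      intro heq
      exact hc ⟨hlt, by rw [← h1, heq]⟩
    omega

noncomputable def lUn : List (Fin n) :=
  (Finset.univ.filter fun i => i ∉ satReach T π).sort (· ≤ ·)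

noncomputable def dBn : ℕ := max 1 (n - (satReach T π).ncard)

lemma dBn_pos : 0 < dBn T π := lt_of_lt_of_le one_pos (le_max_left _ _)

lemma sat_ncard : (satReach T π).ncard =
    (Finset.univ.filter fun i => i ∈ satReach T π).card := by
  classical
  rw [Set.ncard_eq_toFinset_card']
  congr 1
  ext i
  simp

lemma lUn_length : (lUn T π).length ≤ dBn T π := by
  classical
  rw [lUn, Finset.length_sort]
  have h := Finset.card_filter_add_card_filter_not
    (s := (Finset.univ : Finset (Fin n))) (p := fun i => i ∈ satReach T π)
  rw [Finset.card_univ, Fintype.card_fin] at h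
  have h2 := sat_ncard T π
  have h3 : (Finset.univ.filter fun i => i ∉ satReach T π).card
      = n - (satReach T π).ncard := by
    rw [h2]
    omega
  rw [h3, dBn]
  exact le_max_right _ _

variable (hn : 0 < n)

noncomputable def decP (d : ℕ) : Fin n := (lUn T π).getD d ⟨0, hn⟩

noncomputable def encP (i : Fin n) : ℕ := (lUn T π).idxOf i % dBn T π

lemma encP_lt (i : Fin n) : encP T π i < dBn T π := Nat.mod_lt _ (dBn_pos T π)

lemma dec_enc {i : Fin n} (hi : i ∉ satReach T π) : decP T π hn (encP T π i) = i := by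
  have hmem : i ∈ lUn T π := by
    rw [lUn, Finset.mem_sort, Finset.mem_filter]
    exact ⟨Finset.mem_univ i, hi⟩
  have hlt : (lUn T π).idxOf i < (lUn T π).length := List.idxOf_lt_length_iff.2 hmem
  have hlt2 : (lUn T π).idxOf i < dBn T π := lt_of_lt_of_le hlt (lUn_length T π)
  rw [encP, Nat.mod_eq_of_lt hlt2, decP, List.getD_eq_getElem _ _ hlt,
    List.getElem_idxOf]

/-- The memory states of the Mealy machine. -/
def mstate : Type := Fin (dBn T π) × Fin (Lb T π)

instance : Finite (mstate T π) := by rw [mstate]; infer_instance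

noncomputable def mUp (m : mstate T π) (v : V) : mstate T π :=
  (if OnP T π m.2.1 v ∧ A.owner v ∉ satReach T π
      then ⟨encP T π (A.owner v), encP_lt T π _⟩ else m.1,
   if h : m.2.1 + 1 < Lb T π ∧ v = π (tcut T π (m.2.1 + 1)) then ⟨m.2.1 + 1, h.1⟩
   else m.2)

noncomputable def mNxt (m : mstate T π) (v : V) : V :=
  if OnP T π m.2.1 v then π (jsel T π m.2.1 v + 1)
  else punish A T (decP T π hn m.1.1) v

lemma mUp_snd (m : mstate T π) (v : V) : ((mUp A T π m v).2 : ℕ) =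
    if m.2.1 + 1 < Lb T π ∧ v = π (tcut T π (m.2.1 + 1)) then m.2.1 + 1
    else m.2.1 := by
  rw [mUp]
  by_cases h : m.2.1 + 1 < Lb T π ∧ v = π (tcut T π (m.2.1 + 1))
  · rw [if_pos h]
    show ((dite _ _ _ : Fin (Lb T π)) : ℕ) = _
    rw [dif_pos h]
  · rw [if_neg h]
    show ((dite _ _ _ : Fin (Lb T π)) : ℕ) = _
    rw [dif_neg h]

lemma mUp_fst_pos (m : mstate T π) (v : V)
    (h : OnP T π m.2.1 v ∧ A.owner v ∉ satReach T π) :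
    ((mUp A T π m v).1 : ℕ) = encP T π (A.owner v) := by
  rw [mUp, if_pos h]

lemma mUp_fst_neg (m : mstate T π) (v : V)
    (h : ¬ (OnP T π m.2.1 v ∧ A.owner v ∉ satReach T π)) :
    (mUp A T π m v).1 = m.1 := by
  rw [mUp, if_neg h]

noncomputable def mm (hπ : A.IsPlay π) : Mealy A (mstate T π) where
  init := (⟨0, dBn_pos T π⟩, ⟨0, lt_of_lt_of_le one_pos (le_max_left _ _)⟩)
  up := mUp A T π
  nxt := mNxt A T π hn
  valid := by
    intro m v
    rw [mNxt]
    by_cases h : OnP T π m.2.1 v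
    · rw [if_pos h]
      have h1 := (jsel_spec T π h).1
      have h2 := hπ (jsel T π m.2.1 v)
      rwa [h1] at h2
    · rw [if_neg h]
      exact punish_valid T _ v

noncomputable def mstrat (hπ : A.IsPlay π) : A.Strategy :=
  ⟨fun h v => (mm A T π hn hπ).nxt (h.foldl (mm A T π hn hπ).up (mm A T π hn hπ).init) v,
   fun h v => (mm A T π hn hπ).valid _ _⟩

end Construction
end Arena

open Arena

/-- From any NE in a reachability game one can derive a finite-memory
NE with the same set of satisfied objectives; memory size at most
`max 1 (n − |Sat|) * max 1 |Visit ∖ {0}|`, in particular at most `n²`. -/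
theorem reach_fm_ne
    (V : Type) (n : ℕ) (A : Arena V n) (T : Fin n → Set V) (v0 : V)
    (σ' : Fin n → A.Strategy)
    (hNE : A.IsNEObj (fun i => ReachObj (T i)) σ' v0) :
    ∃ σ : Fin n → A.Strategy,
      A.IsNEObj (fun i => ReachObj (T i)) σ v0 ∧
      satReach T (outcome A σ v0) = satReach T (outcome A σ' v0) ∧
      ∀ i, HasMemorySize (σ i)
          (max 1 (n - (satReach T (outcome A σ' v0)).ncard) *
            max 1 ((visitSet T (outcome A σ' v0) \ {0}).ncard)) ∧
        HasMemorySize (σ i) (n ^ 2) := by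
  classical
  rcases Nat.eq_zero_or_pos n with hn | hn
  · subst hn
    exact ⟨σ', hNE, rfl, fun i => i.elim0⟩
  have hπ : A.IsPlay (outcome A σ' v0) := outcome_isPlay σ' v0
  set π := outcome A σ' v0 with hπdef
  set σ : Fin n → A.Strategy := fun _ => mstrat A T π hn hπ with hσdef
  set ρ := outcome A σ v0 with hρdef
  set St : ℕ → mstate T π := fun k =>
    (pref ρ k).foldl (mUp A T π) (mm A T π hn hπ).init with hStdef
  have hπ0 : π 0 = v0 := by rw [hπdef]; exact outcome_zero _ _
  have hρ0 : ρ 0 = v0 := by rw [hρdef]; exact outcome_zero _ _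
  have ρsucc : ∀ k, ρ (k + 1) = mNxt A T π hn (St k) (ρ k) := by
    intro k
    have h := outcome_succ σ v0 k
    rw [← hρdef] at h
    rw [h, hσdef, hStdef]
    rfl
  have StSucc : ∀ k, St (k + 1) = mUp A T π (St k) (ρ k) := by
    intro k
    rw [hStdef]
    exact foldl_pref_succ _ _ _ k
  have hSt0l : ((St 0).2.1 : ℕ) = 0 := by rw [hStdef]; rfl
  -- the generated play is always on-path
  have inv1 : ∀ k, OnP T π ((St k).2.1) (ρ k) := by
    intro k
    induction k with
    | zero =>
        rw [hSt0l, hρ0]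
        exact ⟨0, hπ0, by rw [tcut_zero], fun _ => Nat.zero_le _⟩
    | succ k ih =>
        have hcomp : ((St (k+1)).2.1 : ℕ) =
            if ((St k).2.1 + 1 < Lb T π ∧ ρ k = π (tcut T π ((St k).2.1 + 1)))
            then (St k).2.1 + 1 else (St k).2.1 := by
          rw [StSucc k]
          exact mUp_snd A T π _ _
        rw [ρsucc k, mNxt, if_pos ih, hcomp]
        exact onp_step T π ih
  -- progress within a phase
  have adv : ∀ m, m + 1 ≤ Lnum T π → ∀ c k, ((St k).2.1 : ℕ) = m →
      (win1 T π m (ρ k)).Nonempty →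
      tcut T π (m + 1) - sSup (win1 T π m (ρ k)) ≤ c →
      ∃ k', ((St k').2.1 : ℕ) = m ∧ ρ k' = π (tcut T π (m + 1)) := by
    intro m hm c
    induction c with
    | zero =>
        intro k h1 h2 h3
        have hmem := Nat.sSup_mem h2 (win1_bdd T π m (ρ k))
        have heq : sSup (win1 T π m (ρ k)) = tcut T π (m + 1) := by
          have := hmem.2.2
          omega
        exact ⟨k, h1, by rw [← heq]; exact hmem.1.symm⟩
    | succ c ih =>
        intro k h1 h2 h3
        have hmem := Nat.sSup_mem h2 (win1_bdd T π m (ρ k))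
        by_cases hs : sSup (win1 T π m (ρ k)) = tcut T π (m + 1)
        · exact ⟨k, h1, by rw [← hs]; exact hmem.1.symm⟩
        · have hslt : sSup (win1 T π m (ρ k)) < tcut T π (m + 1) :=
            lt_of_le_of_ne hmem.2.2 hs
          have honp : OnP T π m (ρ k) := h1 ▸ inv1 k
          have hjsel : jsel T π m (ρ k) = sSup (win1 T π m (ρ k)) :=
            jsel_eq_sSup T π h2
          have hρ1 : ρ (k + 1) = π (sSup (win1 T π m (ρ k)) + 1) := by
            rw [ρsucc k, mNxt, h1, if_pos honp, hjsel]
          have hnot : ¬ ρ k = π (tcut T π (m + 1)) := by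
            intro he
            have hmem2 : tcut T π (m + 1) ∈ win1 T π m (ρ k) :=
              ⟨he.symm, tcut_le T π hm, le_refl _⟩
            have := le_csSup (win1_bdd T π m (ρ k)) hmem2
            omega
          have hS1 : ((St (k + 1)).2.1 : ℕ) = m := by
            rw [StSucc k, mUp_snd A T π _ _, h1,
              if_neg (fun hc => hnot hc.2)]
          have hwin1 : sSup (win1 T π m (ρ k)) + 1 ∈ win1 T π m (ρ (k + 1)) := by
            refine ⟨hρ1.symm, ?_, ?_⟩
            · have := hmem.2.1; omega
            · omega
          have hne2 : (win1 T π m (ρ (k + 1))).Nonempty := ⟨_, hwin1⟩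
          have hsup2 := le_csSup (win1_bdd T π m (ρ (k + 1))) hwin1
          exact ih (k + 1) hS1 hne2 (by omega)
  -- each phase is eventually entered in its window
  have phase : ∀ m, m + 1 ≤ Lnum T π →
      ∃ k, ((St k).2.1 : ℕ) = m ∧ (win1 T π m (ρ k)).Nonempty := by
    intro m
    induction m with
    | zero =>
        intro _
        refine ⟨0, hSt0l, ⟨0, ?_, ?_, Nat.zero_le _⟩⟩
        · rw [hπ0, hρ0]
        · rw [tcut_zero]
    | succ m ihm =>
        intro hm2
        obtain ⟨k0, hk0, hne0⟩ := ihm (by omega)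
        obtain ⟨k', hS', hρ'⟩ := adv m (by omega) _ k0 hk0 hne0 le_rfl
        have hmLb : m + 1 < Lb T π := by rw [Lb]; omega
        have hwmem : tcut T π (m + 1) ∈ win1 T π m (ρ k') :=
          ⟨hρ'.symm, tcut_le T π (by omega), le_refl _⟩
        have hne' : (win1 T π m (ρ k')).Nonempty := ⟨_, hwmem⟩
        have hjsel : jsel T π m (ρ k') = tcut T π (m + 1) := by
          rw [jsel_eq_sSup T π hne']
          exact le_antisymm (csSup_le hne' fun x hx => hx.2.2)
            (le_csSup (win1_bdd T π m (ρ k')) hwmem)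
        have honp : OnP T π m (ρ k') := hS' ▸ inv1 k'
        have hρ1 : ρ (k' + 1) = π (tcut T π (m + 1) + 1) := by
          rw [ρsucc k', mNxt, hS', if_pos honp, hjsel]
        have hS1 : ((St (k' + 1)).2.1 : ℕ) = m + 1 := by
          rw [StSucc k', mUp_snd A T π _ _, hS', if_pos ⟨hmLb, hρ'⟩]
        refine ⟨k' + 1, hS1, ⟨tcut T π (m + 1) + 1, hρ1.symm, by omega, ?_⟩⟩
        have := tcut_lt T π (m := m + 1) hm2
        omega
  -- all cut vertices are visited
  have visits : ∀ m, 1 ≤ m → m ≤ Lnum T π → ∃ k, ρ k = π (tcut T π m) := by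
    intro m h1 h2
    obtain ⟨m', rfl⟩ : ∃ m', m = m' + 1 := ⟨m - 1, by omega⟩
    obtain ⟨k0, hk0, hne0⟩ := phase m' h2
    obtain ⟨k', _, hρ'⟩ := adv m' h2 _ k0 hk0 hne0 le_rfl
    exact ⟨k', hρ'⟩
  -- satisfied sets coincide
  have satSub : satReach T ρ ⊆ satReach T π := by
    rintro i ⟨j, hj⟩
    obtain ⟨j', hj', -⟩ := inv1 j
    exact ⟨j', by rw [hj']; exact hj⟩
  have satSup : satReach T π ⊆ satReach T ρ := by
    rintro i ⟨j, hj⟩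
    have hfv : sInf {j | π j ∈ T i} ∈ {j | π j ∈ T i} := Nat.sInf_mem ⟨j, hj⟩
    by_cases h0 : sInf {j | π j ∈ T i} = 0
    · refine ⟨0, ?_⟩
      rw [hρ0, ← hπ0, ← h0]
      exact hfv
    · have hD : sInf {j | π j ∈ T i} ∈ visitSet T π \ {0} :=
        ⟨⟨i, ⟨j, hj⟩, rfl⟩, by simpa using h0⟩
      obtain ⟨m, hm1, hm2, hm3⟩ := tcut_surj T π hD
      obtain ⟨k, hk⟩ := visits m hm1 hm2
      exact ⟨k, by rw [hk, hm3]; exact hfv⟩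
  have satEq : satReach T ρ = satReach T π := satSub.antisymm satSup
  -- Nash equilibrium
  have hNE2 : A.IsNEObj (fun i => ReachObj (T i)) σ v0 := by
    intro i τ hdev
    by_cases hi : i ∈ satReach T π
    · obtain ⟨j, hj⟩ := satSup hi
      show outcome A σ v0 ∈ ReachObj (T i)
      rw [← hρdef]
      exact ⟨j, hj⟩
    · exfalso
      set μ := outcome A (Function.update σ i τ) v0 with hμdef
      have hμplay : A.IsPlay μ := by rw [hμdef]; exact outcome_isPlay _ v0
      set Sμ : ℕ → mstate T π := fun k =>
        (pref μ k).foldl (mUp A T π) (mm A T π hn hπ).init with hSμdef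
      have Sμsucc : ∀ k, Sμ (k + 1) = mUp A T π (Sμ k) (μ k) := by
        intro k
        rw [hSμdef]
        exact foldl_pref_succ _ _ _ k
      have μsucc : ∀ k, A.owner (μ k) ≠ i →
          μ (k + 1) = mNxt A T π hn (Sμ k) (μ k) := by
        intro k hown
        have h := outcome_succ (Function.update σ i τ) v0 k
        rw [← hμdef] at h
        rw [h, Function.update_of_ne hown, hσdef, hSμdef]
        rfl
      have notW : ∀ J, π J ∉ Wset A T i := fun J => outcome_notin_Wset hNE hi J
      have inv : ∀ k, μ k ∉ Wset A T i ∧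
          (¬ OnP T π ((Sμ k).2.1) (μ k) → decP T π hn ((Sμ k).1.1) = i) := by
        intro k
        induction k with
        | zero =>
            have hμ0 : μ 0 = v0 := by rw [hμdef]; exact outcome_zero _ _
            constructor
            · rw [hμ0, ← hπ0]
              exact notW 0
            · intro hno
              exfalso
              apply hno
              have hS0 : ((Sμ 0).2.1 : ℕ) = 0 := by rw [hSμdef]; rfl
              rw [hS0, hμ0]
              exact ⟨0, hπ0, by rw [tcut_zero], fun _ => Nat.zero_le _⟩
        | succ k ih =>
            obtain ⟨ih1, ih2⟩ := ih
            by_cases hown : A.owner (μ k) = i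
            · refine ⟨notin_Wset_succ ih1 hown (hμplay k), fun _ => ?_⟩
              by_cases hOn : OnP T π ((Sμ k).2.1) (μ k)
              · have hcond : OnP T π ((Sμ k).2.1) (μ k) ∧
                    A.owner (μ k) ∉ satReach T π := ⟨hOn, by rw [hown]; exact hi⟩
                have : ((Sμ (k+1)).1.1 : ℕ) = encP T π (A.owner (μ k)) := by
                  rw [Sμsucc k]
                  exact mUp_fst_pos A T π _ _ hcond
                rw [this, hown]
                exact dec_enc T π hn hi
              · have : (Sμ (k+1)).1 = (Sμ k).1 := by
                  rw [Sμsucc k]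
                  exact mUp_fst_neg A T π _ _ (fun hc => hOn hc.1)
                rw [this]
                exact ih2 hOn
            · have hstep := μsucc k hown
              by_cases hOn : OnP T π ((Sμ k).2.1) (μ k)
              · constructor
                · rw [hstep, mNxt, if_pos hOn]
                  exact notW _
                · intro hno
                  exfalso
                  apply hno
                  have hs2 : ((Sμ (k+1)).2.1 : ℕ) =
                      if ((Sμ k).2.1 + 1 < Lb T π ∧
                        μ k = π (tcut T π ((Sμ k).2.1 + 1)))
                      then (Sμ k).2.1 + 1 else (Sμ k).2.1 := by
                    rw [Sμsucc k]
                    exact mUp_snd A T π _ _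
                  rw [hstep, mNxt, if_pos hOn, hs2]
                  exact onp_step T π hOn
              · constructor
                · rw [hstep, mNxt, if_neg hOn, ih2 hOn]
                  exact punish_avoid ih1
                · intro _
                  have : (Sμ (k+1)).1 = (Sμ k).1 := by
                    rw [Sμsucc k]
                    exact mUp_fst_neg A T π _ _ (fun hc => hOn hc.1)
                  rw [this]
                  exact ih2 hOn
      obtain ⟨j, hj⟩ := hdev
      exact (inv j).1 (subset_Wset T i hj)
  -- memory bounds
  have hcard : Nat.card (mstate T π) = dBn T π * Lb T π := by
    unfold mstate
    simp [Nat.card_eq_fintype_card]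
  have hLnum : Lnum T π = (visitSet T π \ {0}).ncard :=
    (Set.ncard_eq_toFinset_card _ (visD_finite T π)).symm
  have hVisLe : (visitSet T π \ {0}).ncard ≤ n := by
    have h1 : visitSet T π \ {0} ⊆
        (fun i : Fin n => sInf {j | π j ∈ T i}) '' Set.univ := by
      rintro m ⟨⟨i, _, hm⟩, -⟩
      exact ⟨i, trivial, hm.symm⟩
    calc (visitSet T π \ {0}).ncard
        ≤ ((fun i : Fin n => sInf {j | π j ∈ T i}) '' Set.univ).ncard :=
          Set.ncard_le_ncard h1 (Set.toFinite _)
      _ ≤ (Set.univ : Set (Fin n)).ncard := Set.ncard_image_le (Set.toFinite _)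
      _ = n := by rw [Set.ncard_univ, Nat.card_eq_fintype_card, Fintype.card_fin]
  have hind : ∀ i : Fin n, InducedBy (σ i) (mm A T π hn hπ) := by
    intro i
    rw [hσdef]
    intro h v
    rfl
  refine ⟨σ, hNE2, satEq, fun i => ⟨?_, ?_⟩⟩
  · refine ⟨mstate T π, mm A T π hn hπ, inferInstance, ?_, hind i⟩
    rw [hcard, dBn, Lb, hLnum]
  · refine ⟨mstate T π, mm A T π hn hπ, inferInstance, ?_, hind i⟩
    rw [hcard, pow_two]
    have h1 : dBn T π ≤ n := max_le hn (Nat.sub_le _ _)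
    have h2 : Lb T π ≤ n := max_le hn (by rw [hLnum]; exact hVisLe)
    exact Nat.mul_le_mul h1 h2
end

section
/- Let G be an n-player reachability game on a possibly infinite arena, where player i's objective is Reach(T_i) for a target set T_i ⊆ V. If there exists a Nash equilibrium from v_0 such that no player's objective (resp. every player's objective) is satisfied by its outcome, then there exists a Nash equilibrium from v_0 such that no player's objective (resp. every player's objective) is satisfied by its outcome and in which every strategy is finite-memory with memory size at most n. -/
open scoped ENNReal Classical

open Arena
namespace NEAux
open Arena

variable {V : Type} {n : ℕ}

noncomputable def dflt (A : Arena V n) (v : V) : V := (A.no_deadlock v).choose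

lemma dflt_edge (A : Arena V n) (v : V) : A.E v (dflt A v) := (A.no_deadlock v).choose_spec

lemma pref_zero (π : ℕ → V) : pref π 0 = [] := rfl

lemma pref_succ (π : ℕ → V) (j : ℕ) : pref π (j+1) = pref π j ++ [π j] := by
  simp [pref, List.range_succ]

lemma pref_length (π : ℕ → V) (j : ℕ) : (pref π j).length = j := by simp [pref]

lemma pref_succ' (π : ℕ → V) (j : ℕ) :
    pref π (j+1) = π 0 :: pref (fun m => π (m+1)) j := by
  simp [pref, List.range_succ_eq_map, List.map_map]

lemma pref_tail (π : ℕ → V) (j : ℕ) :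
    (pref π (j+1)).tail = pref (fun m => π (m+1)) j := by
  rw [pref_succ']; rfl

lemma pref_drop (π : ℕ → V) (j k : ℕ) :
    (pref π (j+k)).drop k = pref (fun m => π (m+k)) j := by
  have : j + k = k + j := Nat.add_comm j k
  rw [this]
  simp only [pref, List.range_add, List.map_append, List.map_map, List.drop_left', List.length_map,
    List.length_range]
  exact List.map_congr_left fun m _ => by simp [Nat.add_comm]

lemma outcomeAux_fst (A : Arena V n) (σ : Fin n → A.Strategy) (v0 : V) :
    ∀ j, (outcomeAux A σ v0 j).1 = pref (outcome A σ v0) j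
  | 0 => by simp [outcomeAux, pref]
  | j+1 => by
      show (outcomeAux A σ v0 j).1 ++ [(outcomeAux A σ v0 j).2] = _
      rw [pref_succ, outcomeAux_fst A σ v0 j]; rfl

lemma outcome_zero (A : Arena V n) (σ : Fin n → A.Strategy) (v0 : V) :
    outcome A σ v0 0 = v0 := rfl

lemma outcome_succ (A : Arena V n) (σ : Fin n → A.Strategy) (v0 : V) (j : ℕ) :
    outcome A σ v0 (j+1)
      = (σ (A.owner (outcome A σ v0 j))).next (pref (outcome A σ v0) j)
          (outcome A σ v0 j) := by
  show (outcomeAux A σ v0 (j+1)).2 = _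
  rw [show (outcomeAux A σ v0 (j+1)).2
      = (σ (A.owner (outcomeAux A σ v0 j).2)).next (outcomeAux A σ v0 j).1
          (outcomeAux A σ v0 j).2 from rfl, outcomeAux_fst]
  rfl

lemma outcome_edge (A : Arena V n) (σ : Fin n → A.Strategy) (v0 : V) (j : ℕ) :
    A.E (outcome A σ v0 j) (outcome A σ v0 (j+1)) := by
  rw [outcome_succ]; exact (σ _).valid _ _

lemma outcome_agree (A : Arena V n) (σ₁ σ₂ : Fin n → A.Strategy) (v0 : V) (k : ℕ)
    (hag : ∀ (j : Fin n) (h : List V) (v : V), h.length < k → (σ₁ j).next h v = (σ₂ j).next h v) :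
    ∀ t, t ≤ k → outcomeAux A σ₁ v0 t = outcomeAux A σ₂ v0 t := by
  intro t
  induction t with
  | zero => intro _; rfl
  | succ t ih =>
      intro ht
      have h1 := ih (Nat.le_of_succ_le ht)
      show ((outcomeAux A σ₁ v0 t).1 ++ [(outcomeAux A σ₁ v0 t).2],
             (σ₁ (A.owner (outcomeAux A σ₁ v0 t).2)).next (outcomeAux A σ₁ v0 t).1
               (outcomeAux A σ₁ v0 t).2)
          = ((outcomeAux A σ₂ v0 t).1 ++ [(outcomeAux A σ₂ v0 t).2],
             (σ₂ (A.owner (outcomeAux A σ₂ v0 t).2)).next (outcomeAux A σ₂ v0 t).1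
               (outcomeAux A σ₂ v0 t).2)
      rw [h1]
      congr 1
      apply hag
      rw [outcomeAux_fst, pref_length]
      omega

end NEAux
namespace NEAux
open Arena

variable {V : Type} {n : ℕ}

/-- `Ek A k v x`: there is an `E`-path of length `k` from `v` to `x`. -/
def Ek (A : Arena V n) : ℕ → V → V → Prop
  | 0, v, x => v = x
  | k+1, v, x => ∃ u, A.E v u ∧ Ek A k u x

lemma Ek_of_play (A : Arena V n) (π : ℕ → V) (hπ : ∀ j, A.E (π j) (π (j+1))) :
    ∀ k a, Ek A k (π a) (π (a + k))
  | 0, a => rfl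
  | k+1, a => by
      refine ⟨π (a+1), hπ a, ?_⟩
      have := Ek_of_play A π hπ k (a+1)
      rwa [show a + 1 + k = a + (k+1) by omega] at this

lemma step_ex (A : Arena V n) {x v : V} (h : (∃ k, Ek A k v x) ∧ v ≠ x) :
    ∃ u, A.E v u ∧ (∃ k, Ek A k u x) ∧
      sInf {k | Ek A k u x} < sInf {k | Ek A k v x} := by
  have hne : {k | Ek A k v x}.Nonempty := h.1
  have hm : Ek A (sInf {k | Ek A k v x}) v x := Nat.sInf_mem hne
  have hnz : sInf {k | Ek A k v x} ≠ 0 := by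
    intro h0
    rw [h0] at hm
    exact h.2 hm
  obtain ⟨m', hm'⟩ := Nat.exists_eq_succ_of_ne_zero hnz
  rw [hm'] at hm
  obtain ⟨u, he, hk⟩ := hm
  refine ⟨u, he, ⟨m', hk⟩, ?_⟩
  have : sInf {k | Ek A k u x} ≤ m' := Nat.sInf_le hk
  omega

noncomputable def step (A : Arena V n) (x v : V) : V :=
  if h : (∃ k, Ek A k v x) ∧ v ≠ x then (step_ex A h).choose else dflt A v

lemma step_edge (A : Arena V n) (x v : V) : A.E v (step A x v) := by
  unfold step
  split
  · exact (step_ex A (by assumption)).choose_spec.1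
  · exact dflt_edge A v

lemma step_spec (A : Arena V n) {x v : V} (h : (∃ k, Ek A k v x) ∧ v ≠ x) :
    (∃ k, Ek A k (step A x v) x) ∧
      sInf {k | Ek A k (step A x v) x} < sInf {k | Ek A k v x} := by
  unfold step
  rw [dif_pos h]
  exact (step_ex A h).choose_spec.2

/-- The winning region of player `i` in the coalition game for `Reach (T i)`. -/
def W (A : Arena V n) (T : Fin n → Set V) (i : Fin n) : Set V :=
  coalWin A i (ReachObj (T i))

lemma coal_owner_iff (A : Arena V n) (i : Fin n) (v : V) :
    (coalition A i).owner v = 0 ↔ A.owner v = i := by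
  by_cases h : A.owner v = i <;> simp [coalition, h]

lemma mem_W_iff (A : Arena V n) (T : Fin n → Set V) {i : Fin n} {v : V} :
    v ∈ W A T i ↔ ∃ σ : A.Strategy, ∀ ρ : ℕ → V, (∀ j, A.E (ρ j) (ρ (j+1))) → ρ 0 = v →
      (∀ j, A.owner (ρ j) = i → ρ (j+1) = σ.next (pref ρ j) (ρ j)) → ∃ j, ρ j ∈ T i := by
  constructor
  · rintro ⟨σ, hσ⟩
    refine ⟨⟨σ.next, σ.valid⟩, fun ρ hp h0 hc => ?_⟩
    exact hσ ρ hp h0 (fun j hj => hc j ((coal_owner_iff A i (ρ j)).mp hj))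
  · rintro ⟨σ, hσ⟩
    refine ⟨⟨σ.next, σ.valid⟩, fun ρ hp h0 hc => ?_⟩
    exact hσ ρ hp h0 (fun j hj => hc j ((coal_owner_iff A i (ρ j)).mpr hj))

lemma target_subset_W (A : Arena V n) (T : Fin n → Set V) (i : Fin n) : T i ⊆ W A T i := by
  intro v hv
  exact (mem_W_iff A T).mpr ⟨⟨fun _ w => dflt A w, fun _ w => dflt_edge A w⟩,
    fun ρ _ h0 _ => ⟨0, h0 ▸ hv⟩⟩

lemma W_step_owner (A : Arena V n) (T : Fin n → Set V) {i : Fin n} {v u : V}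
    (hv : A.owner v = i) (he : A.E v u) (hu : u ∈ W A T i) : v ∈ W A T i := by
  obtain ⟨σu, hσu⟩ := (mem_W_iff A T).mp hu
  refine (mem_W_iff A T).mpr ⟨⟨fun h w => if h = [] then (if w = v then u else dflt A w)
      else σu.next h.tail w, ?_⟩, ?_⟩
  · intro h w
    split
    · split
      · next hw => rw [hw]; exact he
      · exact dflt_edge A w
    · exact σu.valid _ _
  · intro ρ hp h0 hc
    have h1 : ρ 1 = u := by
      have := hc 0 (h0 ▸ hv)
      rw [this, pref_zero]
      simp [h0]
    have := hσu (fun m => ρ (m+1)) (fun j => hp (j+1)) h1 ?_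
    · obtain ⟨j, hj⟩ := this
      exact ⟨j+1, hj⟩
    · intro j hj
      have hcc := hc (j+1) hj
      show ρ (j+1+1) = σu.next (pref (fun m => ρ (m+1)) j) (ρ (j+1))
      rw [hcc]
      have hne : pref ρ (j+1) ≠ [] := by
        intro hnil
        have := pref_length ρ (j+1)
        rw [hnil] at this
        simp at this
      show (if pref ρ (j+1) = [] then _ else σu.next (pref ρ (j+1)).tail (ρ (j+1))) = _
      rw [if_neg hne, pref_tail]

noncomputable def dfltStrat (A : Arena V n) : A.Strategy :=
  ⟨fun _ w => dflt A w, fun _ w => dflt_edge A w⟩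

noncomputable def winStrat (A : Arena V n) (T : Fin n → Set V) (i : Fin n) (u : V) :
    A.Strategy :=
  if hu : u ∈ W A T i then ((mem_W_iff A T).mp hu).choose else dfltStrat A

lemma winStrat_spec (A : Arena V n) (T : Fin n → Set V) {i : Fin n} {u : V}
    (hu : u ∈ W A T i) : ∀ ρ : ℕ → V, (∀ j, A.E (ρ j) (ρ (j+1))) → ρ 0 = u →
      (∀ j, A.owner (ρ j) = i →
        ρ (j+1) = (winStrat A T i u).next (pref ρ j) (ρ j)) → ∃ j, ρ j ∈ T i := by
  unfold winStrat
  rw [dif_pos hu]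
  exact ((mem_W_iff A T).mp hu).choose_spec

lemma head_pref (ρ : ℕ → V) (j : ℕ) (w : V) :
    (pref ρ (j+1)).headD w = ρ 0 := by
  rw [pref_succ']; rfl

lemma W_step_all (A : Arena V n) (T : Fin n → Set V) {i : Fin n} {v : V}
    (h : ∀ u, A.E v u → u ∈ W A T i) : v ∈ W A T i := by
  refine (mem_W_iff A T).mpr ⟨⟨fun h w => if h = [] then dflt A w
      else (winStrat A T i (h.tail.headD w)).next h.tail w, ?_⟩, ?_⟩
  · intro h w
    split
    · exact dflt_edge A w
    · exact (winStrat A T i _).valid _ _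
  · intro ρ hp h0 hc
    have hu : ρ 1 ∈ W A T i := h (ρ 1) (h0 ▸ hp 0)
    have := winStrat_spec A T hu (fun m => ρ (m+1)) (fun j => hp (j+1)) rfl ?_
    · obtain ⟨j, hj⟩ := this
      exact ⟨j+1, hj⟩
    · intro j hj
      have hcc := hc (j+1) hj
      show ρ (j+1+1) = (winStrat A T i (ρ 1)).next (pref (fun m => ρ (m+1)) j) (ρ (j+1))
      rw [hcc]
      have hne : pref ρ (j+1) ≠ [] := by
        intro hnil
        have := pref_length ρ (j+1)
        rw [hnil] at this
        simp at this
      show (if pref ρ (j+1) = [] then _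
        else (winStrat A T i ((pref ρ (j+1)).tail.headD (ρ (j+1)))).next (pref ρ (j+1)).tail
          (ρ (j+1))) = _
      rw [if_neg hne, pref_tail]
      congr 2
      cases j with
      | zero => rfl
      | succ j => rw [head_pref]

end NEAux
namespace NEAux
open Arena

variable {V : Type} {n : ℕ}

lemma ne_outcome_avoids_W (A : Arena V n) (T : Fin n → Set V) (σ' : Fin n → A.Strategy)
    (v0 : V) (hNE : A.IsNEObj (fun i => ReachObj (T i)) σ' v0)
    (hlose : ∀ i, outcome A σ' v0 ∉ ReachObj (T i)) :
    ∀ k i, outcome A σ' v0 k ∉ W A T i := by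
  intro k i hk
  set π := outcome A σ' v0 with hπdef
  set σw := winStrat A T i (π k) with hσw
  set τ : A.Strategy := ⟨fun h v => if h.length < k then (σ' i).next h v
      else σw.next (h.drop k) v, by
    intro h v
    split
    · exact (σ' i).valid _ _
    · exact σw.valid _ _⟩ with hτ
  set ϖ := outcome A (Function.update σ' i τ) v0 with hϖdef
  have hag : ∀ t, t ≤ k → ϖ t = π t := by
    intro t ht
    have := outcome_agree A (Function.update σ' i τ) σ' v0 k ?_ t ht
    · rw [hϖdef, hπdef]
      show (outcomeAux A _ v0 t).2 = (outcomeAux A _ v0 t).2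
      rw [this]
    · intro j h v hlen
      rcases eq_or_ne j i with rfl | hji
      · rw [Function.update_self, hτ]
        exact if_pos hlen
      · rw [Function.update_of_ne hji]
  have key : ∀ m, k ≤ m → A.owner (ϖ m) = i →
      ϖ (m+1) = σw.next (pref (fun t => ϖ (t + k)) (m - k)) (ϖ m) := by
    intro m hm ho
    have h1 : ϖ (m+1) = ((Function.update σ' i τ) (A.owner (ϖ m))).next (pref ϖ m) (ϖ m) :=
      outcome_succ A _ v0 m
    rw [ho, Function.update_self] at h1
    rw [h1]
    show (if (pref ϖ m).length < k then _ else σw.next ((pref ϖ m).drop k) (ϖ m)) = _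
    rw [if_neg (by rw [pref_length]; omega)]
    congr 1
    have := pref_drop ϖ (m - k) k
    rw [show m - k + k = m by omega] at this
    exact this
  have hwin := winStrat_spec A T hk (fun m => ϖ (m + k))
      (fun j => by
        show A.E (ϖ (j + k)) (ϖ (j + 1 + k))
        rw [show j + 1 + k = (j + k) + 1 by omega]
        exact outcome_edge A _ v0 (j + k))
      (by show ϖ (0 + k) = π k; rw [Nat.zero_add]; exact hag k le_rfl)
      (fun j hj => by
        have ho : A.owner (ϖ (j + k)) = i := hj
        have hkey := key (j + k) (by omega) ho
        show ϖ (j + 1 + k) = σw.next (pref (fun m => ϖ (m + k)) j) (ϖ (j + k))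
        rw [show j + 1 + k = (j + k) + 1 by omega, hkey, show j + k - k = j by omega])
  obtain ⟨j, hj⟩ := hwin
  have : ϖ ∈ ReachObj (T i) := ⟨j + k, hj⟩
  exact hlose i (hNE i τ this)

end NEAux
namespace NEAux
open Arena

variable {V : Type} {n : ℕ}

/-- The strategy induced by a Mealy machine. -/
def mmStrat {M : Type} (A : Arena V n) (mm : Mealy A M) : A.Strategy :=
  ⟨fun h v => mm.nxt (h.foldl mm.up mm.init) v, fun h v => mm.valid _ v⟩

lemma foldl_pref_succ {M : Type} (up : M → V → M) (init : M) (π : ℕ → V) (t : ℕ) :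
    (pref π (t+1)).foldl up init = up ((pref π t).foldl up init) (π t) := by
  rw [pref_succ, List.foldl_append]
  rfl

/-- The positional continuation function for the main play in the losing case. -/
noncomputable def mainF (A : Arena V n) (π : ℕ → V) (v : V) : V :=
  if h : ∃ j, π j = v then π (h.choose + 1) else dflt A v

/-- Choice of a successor avoiding `W A T m`. -/
noncomputable def pun (A : Arena V n) (T : Fin n → Set V) (m : Fin n) (v : V) : V :=
  if h : ∃ u, A.E v u ∧ u ∉ W A T m then h.choose else dflt A v

/-- Mealy machine for the all-losing equilibrium: follow the positional version of the
original outcome; once a deviation takes the play outside its range, punish the owner of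
the last on-range vertex by keeping the play outside that player's winning region. -/
noncomputable def mm1 (A : Arena V n) (T : Fin n → Set V) (π : ℕ → V)
    (hπ : ∀ j, A.E (π j) (π (j+1))) (hn : 0 < n) : Mealy A (Fin n) where
  init := ⟨0, hn⟩
  up := fun m v => if v ∈ Set.range π then A.owner v else m
  nxt := fun m v => if v ∈ Set.range π then mainF A π v else pun A T m v
  valid := by
    intro m v
    split
    · unfold mainF
      split
      · next h =>
          have hc := h.choose_spec
          have := hπ h.choose
          rwa [hc] at this
      · exact dflt_edge A v
    · unfold pun
      split
      · next h => exact h.choose_spec.1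
      · exact dflt_edge A v

lemma mainF_mem (A : Arena V n) (π : ℕ → V) {v : V} (hv : v ∈ Set.range π) :
    mainF A π v ∈ Set.range π := by
  unfold mainF
  obtain ⟨j, hj⟩ := hv
  rw [dif_pos ⟨j, hj⟩]
  exact ⟨_, rfl⟩

lemma pun_avoid (A : Arena V n) (T : Fin n → Set V) {m : Fin n} {v : V}
    (hv : v ∉ W A T m) : pun A T m v ∉ W A T m := by
  have hex : ∃ u, A.E v u ∧ u ∉ W A T m := by
    by_contra hno
    push_neg at hno
    exact hv (W_step_all A T hno)
  unfold pun
  rw [dif_pos hex]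
  exact hex.choose_spec.2

/-- Case 1: from an NE where everyone loses, build one with memory `n`. -/
lemma case_lose (A : Arena V n) (T : Fin n → Set V) (v0 : V) (hn : 0 < n)
    (σ' : Fin n → A.Strategy) (hNE : A.IsNEObj (fun i => ReachObj (T i)) σ' v0)
    (hlose : ∀ i, outcome A σ' v0 ∉ ReachObj (T i)) :
    ∃ σ : Fin n → A.Strategy,
      A.IsNEObj (fun i => ReachObj (T i)) σ v0 ∧
      (∀ i, outcome A σ v0 ∉ ReachObj (T i)) ∧
      ∀ i, HasMemorySize (σ i) n := by
  set π := outcome A σ' v0 with hπdef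
  have hπ : ∀ j, A.E (π j) (π (j+1)) := fun j => outcome_edge A σ' v0 j
  have havoid : ∀ k i, π k ∉ W A T i := ne_outcome_avoids_W A T σ' v0 hNE hlose
  set mm := mm1 A T π hπ hn with hmm
  set σ : Fin n → A.Strategy := fun _ => mmStrat A mm with hσdef
  have hPT : ∀ (i : Fin n) (v : V), v ∈ Set.range π → v ∉ T i := by
    rintro i v ⟨j, rfl⟩ hvT
    exact havoid j i (target_subset_W A T i hvT)
  -- key fact: any play where all players except possibly `i` follow `σ` avoids `T i`
  have hdev : ∀ (i : Fin n) (τ : A.Strategy),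
      ∀ t, outcome A (Function.update σ i τ) v0 t ∉ T i := by
    intro i τ
    set D := outcome A (Function.update σ i τ) v0 with hDdef
    set s : ℕ → Fin n := fun t => (pref D t).foldl mm.up mm.init with hsdef
    have hs_succ : ∀ t, s (t+1) = mm.up (s t) (D t) := fun t =>
      foldl_pref_succ mm.up mm.init D t
    have hinv : ∀ t, D t ∈ Set.range π ∨ (D t ∉ W A T i ∧ s t = i) := by
      intro t
      induction t with
      | zero => exact Or.inl ⟨0, rfl⟩
      | succ t ih =>
          have hedge : A.E (D t) (D (t+1)) := outcome_edge A _ v0 t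
          have hDsucc : D (t+1)
              = ((Function.update σ i τ) (A.owner (D t))).next (pref D t) (D t) :=
            outcome_succ A _ v0 t
          by_cases hP : D t ∈ Set.range π
          · -- on the range of π
            rcases eq_or_ne (A.owner (D t)) i with ho | ho
            · -- owner is i : any successor avoids W i
              right
              constructor
              · intro hmem
                obtain ⟨j, hj⟩ := hP
                exact havoid j i (hj ▸ W_step_owner A T (hj ▸ ho) hedge hmem)
              · rw [hs_succ, hmm]
                show (if D t ∈ Set.range π then A.owner (D t) else s t) = i
                rw [if_pos hP, ho]
            · -- another player follows the main positional play
              left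
              rw [hDsucc, Function.update_of_ne ho, hσdef]
              show mm.nxt ((pref D t).foldl mm.up mm.init) (D t) ∈ Set.range π
              rw [hmm]
              show (if D t ∈ Set.range π then mainF A π (D t) else _) ∈ Set.range π
              rw [if_pos hP]
              exact mainF_mem A π hP
          · -- off the range, state blames i
            obtain ⟨hW, hs⟩ : D t ∉ W A T i ∧ s t = i := by
              rcases ih with hmem | hok
              · exact absurd hmem hP
              · exact hok
            have hs' : s (t+1) = i := by
              rw [hs_succ, hmm]
              show (if D t ∈ Set.range π then A.owner (D t) else s t) = i
              rw [if_neg hP]; exact hs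
            right
            rcases eq_or_ne (A.owner (D t)) i with ho | ho
            · exact ⟨fun hmem => (W_step_owner A T ho hedge hmem : D t ∈ W A T i) |> hW, hs'⟩
            · refine ⟨?_, hs'⟩
              rw [hDsucc, Function.update_of_ne ho, hσdef]
              show mm.nxt ((pref D t).foldl mm.up mm.init) (D t) ∉ W A T i
              rw [hmm]
              show (if D t ∈ Set.range π then mainF A π (D t) else pun A T (s t) (D t)) ∉ W A T i
              rw [if_neg hP, show s t = i from hs]
              exact pun_avoid A T hW
    intro t hT
    rcases hinv t with hP | ⟨hW, _⟩
    · exact hPT i (D t) hP hT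
    · exact hW (target_subset_W A T i hT)
  refine ⟨σ, ?_, ?_, ?_⟩
  · intro i τ hmem
    obtain ⟨j, hj⟩ := hmem
    exact absurd hj (hdev i τ j)
  · intro i hmem
    obtain ⟨j, hj⟩ := hmem
    have := hdev i (σ i) j
    rw [Function.update_eq_self] at this
    exact this hj
  · intro i
    exact ⟨Fin n, mm, inferInstance, by simp, fun h v => rfl⟩

end NEAux
namespace NEAux
open Arena

variable {V : Type} {n : ℕ}

/-- Trivial memoryless machine. -/
noncomputable def mm0 (A : Arena V n) : Mealy A (Fin 1) where
  init := 0
  up := fun m _ => m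
  nxt := fun _ v => dflt A v
  valid := fun _ v => dflt_edge A v

/-- Mealy machine visiting checkpoints `x 1, …, x r` in order: in state `l`, head for
`x (l+1)` along distance-decreasing edges. -/
noncomputable def mm2 (A : Arena V n) (x : ℕ → V) (r : ℕ) (hr : 0 < r) :
    Mealy A (Fin r) where
  init := ⟨0, hr⟩
  up := fun l v => if h : l.1 + 1 < r ∧ v = x (l.1 + 1) then ⟨l.1 + 1, h.1⟩ else l
  nxt := fun l v => if v = x (l.1 + 1) then
      (if l.1 + 1 < r then step A (x (l.1 + 2)) v else dflt A v)
    else step A (x (l.1 + 1)) v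
  valid := by
    intro l v
    split
    · split
      · exact step_edge A _ v
      · exact dflt_edge A v
    · exact step_edge A _ v

lemma case_win (A : Arena V n) (T : Fin n → Set V) (v0 : V) (hn : 0 < n)
    (σ' : Fin n → A.Strategy)
    (hwin : ∀ i, outcome A σ' v0 ∈ ReachObj (T i)) :
    ∃ σ : Fin n → A.Strategy,
      A.IsNEObj (fun i => ReachObj (T i)) σ v0 ∧
      (∀ i, outcome A σ v0 ∈ ReachObj (T i)) ∧
      ∀ i, HasMemorySize (σ i) n := by
  classical
  set π := outcome A σ' v0 with hπdef
  have hπ : ∀ j, A.E (π j) (π (j+1)) := fun j => outcome_edge A σ' v0 j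
  have hπ0 : π 0 = v0 := rfl
  set F : Fin n → ℕ := fun i => sInf {j | π j ∈ T i} with hFdef
  have hFmem : ∀ i, π (F i) ∈ T i := fun i => Nat.sInf_mem (hwin i)
  have hFle : ∀ i j, π j ∈ T i → F i ≤ j := fun i j hj => Nat.sInf_le hj
  set ts : List ℕ := ((Finset.image F Finset.univ).filter (fun t => 0 < t)).sort (· ≤ ·)
    with htsdef
  set r : ℕ := ts.length with hrdef
  rcases Nat.eq_zero_or_pos r with hr | hr
  · -- all targets contain v0
    have hv0 : ∀ i, v0 ∈ T i := by
      intro i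
      have hF0 : F i = 0 := by
        by_contra hF0
        have : F i ∈ ts := by
          rw [htsdef, Finset.mem_sort]
          refine Finset.mem_filter.mpr ⟨Finset.mem_image_of_mem F (Finset.mem_univ i), ?_⟩
          omega
        rw [List.eq_nil_of_length_eq_zero hr] at this
        exact absurd this List.not_mem_nil
      have := hFmem i
      rw [hF0] at this
      exact hπ0 ▸ this
    refine ⟨fun _ => mmStrat A (mm0 A), ?_, ?_, ?_⟩
    · intro i τ _
      exact ⟨0, hv0 i⟩
    · intro i
      exact ⟨0, hv0 i⟩
    · intro i
      exact ⟨Fin 1, mm0 A, inferInstance, by simpa using Nat.succ_le_of_lt hn, fun h v => rfl⟩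
  · -- main construction
    set u : ℕ → ℕ := fun l => ts.getD l 0 with hudef
    set x : ℕ → V := fun l => if l = 0 then v0 else π (u (l - 1)) with hxdef
    have hx0 : x 0 = v0 := rfl
    have hxs : ∀ l, x (l + 1) = π (u l) := fun l => rfl
    have hu_mem : ∀ l, l < r → (∃ i, F i = u l) ∧ 0 < u l := by
      intro l hl
      have hget : u l = ts.get ⟨l, hl⟩ := List.getD_eq_get ts 0 ⟨l, hl⟩
      have hmem : u l ∈ ts := hget ▸ List.get_mem ts ⟨l, hl⟩
      rw [htsdef, Finset.mem_sort, Finset.mem_filter, Finset.mem_image] at hmem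
      obtain ⟨⟨i, _, hFi⟩, hpos⟩ := hmem
      exact ⟨⟨i, hFi⟩, hpos⟩
    have hu_mono : ∀ a b, a < b → b < r → u a < u b := by
      intro a b hab hbr
      have hs := Finset.sortedLT_sort ((Finset.image F Finset.univ).filter (fun t => 0 < t))
      have ha : u a = ts.get ⟨a, by omega⟩ := List.getD_eq_get ts 0 ⟨a, by omega⟩
      have hb : u b = ts.get ⟨b, hbr⟩ := List.getD_eq_get ts 0 ⟨b, hbr⟩
      rw [ha, hb]
      exact hs.strictMono_get (show (⟨a, by omega⟩ : Fin ts.length) < ⟨b, hbr⟩ from hab)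
    have hxd : ∀ l, l + 1 ≤ r → x l ≠ x (l + 1) := by
      intro l hl heq
      obtain ⟨⟨i, hFi⟩, hpos⟩ := hu_mem l (by omega)
      rcases Nat.eq_zero_or_pos l with rfl | hlpos
      · -- x 0 = v0 = π 0 equal to π (u 0) would force F i = 0
        rw [hx0, hxs, ← hπ0] at heq
        have : π 0 ∈ T i := by rw [heq, ← hFi]; exact hFmem i
        have := hFle i 0 this
        omega
      · obtain ⟨m, rfl⟩ := Nat.exists_eq_succ_of_ne_zero (Nat.pos_iff_ne_zero.mp hlpos)
        have hFi' : F i = u (m + 1) := hFi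
        rw [hxs, hxs] at heq
        have hlt : u m < u (m + 1) := hu_mono m (m+1) (by omega) (by omega)
        have : π (u m) ∈ T i := by rw [heq, ← hFi']; exact hFmem i
        have := hFle i (u m) this
        omega
    have hxEk : ∀ l, l + 1 ≤ r → ∃ k, Ek A k (x l) (x (l + 1)) := by
      intro l hl
      rcases Nat.eq_zero_or_pos l with rfl | hlpos
      · refine ⟨u 0, ?_⟩
        have := Ek_of_play A π hπ (u 0) 0
        rw [Nat.zero_add] at this
        rw [hx0, ← hπ0, hxs]
        exact this
      · obtain ⟨m, rfl⟩ := Nat.exists_eq_succ_of_ne_zero (Nat.pos_iff_ne_zero.mp hlpos)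
        have hlt : u m < u (m + 1) := hu_mono m (m+1) (by omega) (by omega)
        refine ⟨u (m+1) - u m, ?_⟩
        have := Ek_of_play A π hπ (u (m+1) - u m) (u m)
        rw [show u m + (u (m+1) - u m) = u (m+1) by omega] at this
        rw [hxs, hxs]
        exact this
    set mm := mm2 A x r hr with hmm
    set σ : Fin n → A.Strategy := fun _ => mmStrat A mm with hσdef
    set out := outcome A σ v0 with houtdef
    set s : ℕ → Fin r := fun t => (pref out t).foldl mm.up mm.init with hsdef
    have hs_succ : ∀ t, s (t+1) = mm.up (s t) (out t) := fun t =>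
      foldl_pref_succ mm.up mm.init out t
    have hout_succ : ∀ t, out (t+1) = mm.nxt (s t) (out t) := by
      intro t
      rw [houtdef, outcome_succ]
      rfl
    have hs0 : (s 0).1 = 0 := rfl
    have hout0 : out 0 = v0 := rfl
    -- the journey lemma
    have journey : ∀ d t l', l' + 1 ≤ r →
        (((s t).1 = l' ∧ out t ≠ x (l' + 1)) ∨ ((s t).1 + 1 = l' ∧ out t = x l')) →
        (∃ k, Ek A k (out t) (x (l' + 1))) →
        sInf {k | Ek A k (out t) (x (l' + 1))} ≤ d →
        ∃ t', out t' = x (l' + 1) ∧ (s t').1 = l' := by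
      intro d
      induction d using Nat.strong_induction_on with
      | _ d IH =>
        intro t l' hl'r hhead hEk hle
        have hne : out t ≠ x (l' + 1) := by
          rcases hhead with ⟨_, h⟩ | ⟨h1, h2⟩
          · exact h
          · rw [h2]
            exact hxd l' hl'r
        have hstep : out (t+1) = step A (x (l' + 1)) (out t) ∧ (s (t+1)).1 = l' := by
          rcases hhead with ⟨hA, _⟩ | ⟨hB1, hB2⟩
          · have hsl : s t = ⟨l', by omega⟩ := Fin.ext hA
            constructor
            · rw [hout_succ, hsl, hmm]
              show (if out t = x (l' + 1) then _ else step A (x (l' + 1)) (out t)) = _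
              rw [if_neg hne]
            · rw [hs_succ, hsl, hmm]
              show ((if h : l' + 1 < r ∧ out t = x (l' + 1) then (⟨l' + 1, h.1⟩ : Fin r)
                else ⟨l', by omega⟩) : Fin r).1 = l'
              rw [dif_neg (by tauto)]
          · constructor
            · rw [hout_succ, hmm]
              show (if out t = x ((s t).1 + 1) then
                  (if (s t).1 + 1 < r then step A (x ((s t).1 + 2)) (out t) else _)
                else _) = _
              rw [hB1, if_pos hB2, if_pos (by omega)]
              rw [show (s t).1 + 2 = l' + 1 by omega]
            · rw [hs_succ, hmm]
              show ((if h : (s t).1 + 1 < r ∧ out t = x ((s t).1 + 1) then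
                  (⟨(s t).1 + 1, h.1⟩ : Fin r) else s t) : Fin r).1 = l'
              rw [dif_pos ⟨by omega, by rw [hB1]; exact hB2⟩]
              exact hB1
        have hspec := step_spec A (x := x (l' + 1)) (v := out t) ⟨hEk, hne⟩
        rw [← hstep.1] at hspec
        by_cases harr : out (t+1) = x (l' + 1)
        · exact ⟨t+1, harr, hstep.2⟩
        · exact IH (sInf {k | Ek A k (out (t+1)) (x (l' + 1))}) (by omega)
            (t+1) l' hl'r (Or.inl ⟨hstep.2, harr⟩) hspec.1 le_rfl
    have visits : ∀ l, l + 1 ≤ r → ∃ t, out t = x (l + 1) ∧ (s t).1 = l := by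
      intro l
      induction l with
      | zero =>
          intro hl
          refine journey _ 0 0 hl (Or.inl ⟨hs0, ?_⟩) ?_ le_rfl
          · rw [hout0, ← hx0]
            exact hxd 0 hl
          · rw [hout0, ← hx0]
            exact hxEk 0 hl
      | succ l ihl =>
          intro hl
          obtain ⟨t, ht, hst⟩ := ihl (by omega)
          refine journey _ t (l+1) hl (Or.inr ⟨by omega, ht⟩) ?_ le_rfl
          · rw [ht]
            exact hxEk (l+1) hl
    have hcov : ∀ i, ∃ t, out t ∈ T i := by
      intro i
      rcases Nat.eq_zero_or_pos (F i) with hF0 | hFpos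
      · refine ⟨0, ?_⟩
        have := hFmem i
        rw [hF0, hπ0] at this
        exact this
      · have hmem : F i ∈ ts := by
          rw [htsdef, Finset.mem_sort]
          exact Finset.mem_filter.mpr ⟨Finset.mem_image_of_mem F (Finset.mem_univ i), hFpos⟩
        obtain ⟨⟨l, hl⟩, hget⟩ := List.mem_iff_get.mp hmem
        obtain ⟨t, ht, _⟩ := visits l hl
        refine ⟨t, ?_⟩
        rw [ht, hxs, hudef]
        show π (ts.getD l 0) ∈ T i
        rw [show ts.getD l 0 = ts.get ⟨l, hl⟩ from List.getD_eq_get ts 0 ⟨l, hl⟩, hget]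
        exact hFmem i
    have hrn : r ≤ n := by
      have h1 : r = ((Finset.image F Finset.univ).filter (fun t => 0 < t)).card := by
        rw [hrdef, htsdef, Finset.length_sort]
      calc r ≤ (Finset.image F Finset.univ).card := by rw [h1]; exact Finset.card_filter_le _ _
        _ ≤ Finset.univ.card := Finset.card_image_le
        _ = n := by simp
    refine ⟨σ, ?_, ?_, ?_⟩
    · intro i τ _
      exact hcov i
    · intro i
      exact hcov i
    · intro i
      exact ⟨Fin r, mm, inferInstance, by simpa using hrn, fun h v => rfl⟩

end NEAux

/-- In reachability games, if there is an NE from `v0` whose outcome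
satisfies no (resp. every) player's objective, then there is such an NE whose
strategies all have memory size at most `n`. -/
theorem reach_fm_ne_linear_memory
    (V : Type) (n : ℕ) (A : Arena V n) (T : Fin n → Set V) (v0 : V) :
    ((∃ σ' : Fin n → A.Strategy,
        A.IsNEObj (fun i => ReachObj (T i)) σ' v0 ∧
          ∀ i, outcome A σ' v0 ∉ ReachObj (T i)) →
      ∃ σ : Fin n → A.Strategy,
        A.IsNEObj (fun i => ReachObj (T i)) σ v0 ∧
        (∀ i, outcome A σ v0 ∉ ReachObj (T i)) ∧
        ∀ i, HasMemorySize (σ i) n) ∧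
    ((∃ σ' : Fin n → A.Strategy,
        A.IsNEObj (fun i => ReachObj (T i)) σ' v0 ∧
          ∀ i, outcome A σ' v0 ∈ ReachObj (T i)) →
      ∃ σ : Fin n → A.Strategy,
        A.IsNEObj (fun i => ReachObj (T i)) σ v0 ∧
        (∀ i, outcome A σ v0 ∈ ReachObj (T i)) ∧
        ∀ i, HasMemorySize (σ i) n) := by
  constructor
  · rintro ⟨σ', hNE, hlose⟩
    rcases Nat.eq_zero_or_pos n with rfl | hn
    · exact ⟨σ', hNE, hlose, fun i => i.elim0⟩
    · exact NEAux.case_lose A T v0 hn σ' hNE hlose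
  · rintro ⟨σ', hNE, hwin⟩
    rcases Nat.eq_zero_or_pos n with rfl | hn
    · exact ⟨σ', hNE, hwin, fun i => i.elim0⟩
    · exact NEAux.case_win A T v0 hn σ' hwin
end
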